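/- arXiv:0705.1465 — 2 statements merged into one kernel-verified Lean document; each statement's English description precedes it below -/
import Mathlib

section
/- Subadditivity of the Holevo quantity over tensor factors: let {p_α} be a probability distribution on a finite set and σ_α = σ_{α,1} ⊗ … ⊗ σ_{α,n} product density matrices. Then S(Σ_α p_α σ_α) − Σ_α p_α S(σ_α) ≤ Σ_{k=1}^n [ S(Σ_α p_α σ_{α,k}) − Σ_α p_α S(σ_{α,k}) ]. -/
open Matrix BigOperators
open scoped ComplexOrder

noncomputable section

variable {n m r : Type*} [Fintype n] [DecidableEq n] [Fintype m] [DecidableEq m] [Fintype r] [DecidableEq r]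

/-- A density matrix: positive semidefinite with unit trace. -/
def IsDensity (ρ : Matrix n n ℂ) : Prop := ρ.PosSemidef ∧ ρ.trace = 1

/-- Functional calculus for (Hermitian) matrices, junk value `0` otherwise. -/
noncomputable def matFun (f : ℝ → ℝ) (A : Matrix n n ℂ) : Matrix n n ℂ :=
  if h : A.IsHermitian then
    (h.eigenvectorUnitary : Matrix n n ℂ) *
      Matrix.diagonal (fun i => (f (h.eigenvalues i) : ℂ)) *
      star (h.eigenvectorUnitary : Matrix n n ℂ)
  else 0

/-- Von Neumann entropy (base 2), via eigenvalues; junk value `0` for non-Hermitian input. -/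
noncomputable def vnEntropy (A : Matrix n n ℂ) : ℝ :=
  if h : A.IsHermitian then (∑ i, Real.negMulLog (h.eigenvalues i)) / Real.log 2 else 0

/-- Quantum relative entropy `S(ρ‖σ) = Tr ρ (log ρ - log σ)` (base 2). -/
noncomputable def relEnt (ρ σ : Matrix n n ℂ) : ℝ :=
  ((ρ * matFun Real.log ρ).trace - (ρ * matFun Real.log σ).trace).re / Real.log 2

/-- The extension `φ ⊗ id` of a linear map on matrices to a bipartite system. -/
def tensorExt (φ : Matrix n n ℂ →ₗ[ℂ] Matrix m m ℂ) (M : Matrix (n × r) (n × r) ℂ) :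
    Matrix (m × r) (m × r) ℂ :=
  Matrix.of fun p q => φ (Matrix.of fun i j => M (i, p.2) (j, q.2)) p.1 q.1

/-- Completely positive trace preserving map. -/
def IsCPTP (φ : Matrix n n ℂ →ₗ[ℂ] Matrix m m ℂ) : Prop :=
  (∀ A, (φ A).trace = A.trace) ∧
    (∀ (k : ℕ) (M : Matrix (n × Fin k) (n × Fin k) ℂ), M.PosSemidef → (tensorExt φ M).PosSemidef)

/-- Partial trace over the second factor. -/
def partialTraceR (M : Matrix (n × r) (n × r) ℂ) : Matrix n n ℂ :=
  Matrix.of fun i j => ∑ k, M (i, k) (j, k)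

/-- A pure state: rank-one projection onto a unit vector. -/
def IsPureState (ψ : Matrix n n ℂ) : Prop :=
  ∃ v : n → ℂ, (∑ i, Complex.normSq (v i)) = 1 ∧ ψ = Matrix.vecMulVec v (star v)

end

namespace HolevoAux
open Polynomial


variable {ι κ : Type*} [Fintype ι] [DecidableEq ι] [Fintype κ] [DecidableEq κ]

lemma charmatrix_eq (M : Matrix ι ι ℂ) :
    charmatrix M = Matrix.scalar ι (X : ℂ[X]) - M.map C := rfl

lemma charpoly_diagonal (d : ι → ℂ) :
    (Matrix.diagonal d).charpoly = ∏ i, (X - C (d i)) := by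
  rw [Matrix.charpoly]
  have : charmatrix (Matrix.diagonal d) = Matrix.diagonal (fun i => (X : ℂ[X]) - C (d i)) := by
    ext i j
    by_cases h : i = j
    · subst h; simp [charmatrix_apply_eq]
    · simp [charmatrix_apply_ne _ _ _ h, Matrix.diagonal_apply_ne _ h]
  rw [this, Matrix.det_diagonal]

lemma charpoly_conj_unitary {U : Matrix ι ι ℂ} (hU : U ∈ Matrix.unitaryGroup ι ℂ)
    (M : Matrix ι ι ℂ) : (U * M * star U).charpoly = M.charpoly := by
  have h1 : U * star U = 1 := Matrix.mem_unitaryGroup_iff.mp hU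
  have hUV : (U.map C) * ((star U).map C) = (1 : Matrix ι ι ℂ[X]) := by
    rw [← Matrix.map_mul, h1]; simp
  have hs : Matrix.scalar ι (X : ℂ[X]) = (X : ℂ[X]) • (1 : Matrix ι ι ℂ[X]) := by
    ext i j
    by_cases h : i = j
    · subst h; simp [Matrix.scalar]
    · simp [Matrix.scalar, Matrix.diagonal_apply_ne _ h, Matrix.one_apply_ne h]
  have key : charmatrix (U * M * star U)
      = U.map C * charmatrix M * (star U).map C := by
    rw [charmatrix_eq, charmatrix_eq, mul_sub, sub_mul]
    congr 1
    · rw [hs, mul_smul_comm, smul_mul_assoc, mul_one, hUV]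
    · simp [Matrix.map_mul, mul_assoc]
  rw [Matrix.charpoly, Matrix.charpoly, key, Matrix.det_mul, Matrix.det_mul]
  have hdet : det (U.map C) * det ((star U).map C) = 1 := by
    rw [← Matrix.det_mul, hUV, Matrix.det_one]
  calc det (U.map C) * det (charmatrix M) * det ((star U).map C)
      = det (U.map C) * det ((star U).map C) * det (charmatrix M) := by ring
    _ = det (charmatrix M) := by rw [hdet, one_mul]

/-- If a Hermitian matrix has charpoly `∏ (X - d i)`, then sums of `f` over its
eigenvalues equal sums over `d`. -/
lemma sum_f_eigenvalues {A : Matrix κ κ ℂ} (hA : A.IsHermitian) (d : ι → ℝ)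
    (h : A.charpoly = ∏ i, (X - C ((d i : ℂ)))) (f : ℝ → ℝ) :
    ∑ k, f (hA.eigenvalues k) = ∑ i, f (d i) := by
  have hW := (hA.eigenvectorUnitary).2
  have hch : A.charpoly = ∏ k, (X - C ((hA.eigenvalues k : ℂ))) := by
    conv_lhs => rw [hA.spectral_theorem, Unitary.conjStarAlgAut_apply]
    rw [charpoly_conj_unitary hW, charpoly_diagonal]
    rfl
  have hroots : (Multiset.map (fun k => ((hA.eigenvalues k : ℂ))) Finset.univ.val)
      = (Multiset.map (fun i => ((d i : ℂ))) Finset.univ.val) := by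
    have h1 := Polynomial.roots_multiset_prod_X_sub_C
      (Multiset.map (fun k => ((hA.eigenvalues k : ℂ))) Finset.univ.val)
    have h2 := Polynomial.roots_multiset_prod_X_sub_C
      (Multiset.map (fun i => ((d i : ℂ))) Finset.univ.val)
    rw [Multiset.map_map] at h1 h2
    have e1 : ((Finset.univ.val.map fun k => X - C ((hA.eigenvalues k : ℂ))).prod)
        = ((Finset.univ.val.map fun i => X - C ((d i : ℂ))).prod) := by
      rw [← Finset.prod_eq_multiset_prod, ← Finset.prod_eq_multiset_prod, ← hch, h]
    rw [← h1, ← h2]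
    exact congrArg Polynomial.roots e1
  have hroots' : (Multiset.map (fun k => f (hA.eigenvalues k)) Finset.univ.val)
      = (Multiset.map (fun i => f (d i)) Finset.univ.val) := by
    have := congrArg (Multiset.map (fun z : ℂ => f z.re)) hroots
    rw [Multiset.map_map, Multiset.map_map] at this
    simpa using this
  rw [Finset.sum_eq_multiset_sum, Finset.sum_eq_multiset_sum, hroots']


section Entropy

variable {ι κ : Type*} [Fintype ι] [DecidableEq ι] [Fintype κ] [DecidableEq κ]

lemma vnEntropy_eq {A : Matrix ι ι ℂ} (hA : A.IsHermitian) :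
    vnEntropy A = (∑ i, Real.negMulLog (hA.eigenvalues i)) / Real.log 2 := by
  rw [vnEntropy, dif_pos hA]

lemma trace_eq_sum_eigenvalues {A : Matrix ι ι ℂ} (hA : A.IsHermitian) :
    A.trace = ∑ i, (hA.eigenvalues i : ℂ) := by
  conv_lhs => rw [hA.spectral_theorem, Unitary.conjStarAlgAut_apply]
  rw [Matrix.trace_mul_cycle, Matrix.mem_unitaryGroup_iff'.mp (hA.eigenvectorUnitary).2,
    one_mul, Matrix.trace_diagonal]
  rfl

lemma density_sum_eigenvalues {A : Matrix ι ι ℂ} (hd : IsDensity A) :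
    ∑ i, (hd.1.1.eigenvalues i) = 1 := by
  have h := (trace_eq_sum_eigenvalues hd.1.1).symm.trans hd.2
  have : ((∑ i, hd.1.1.eigenvalues i : ℝ) : ℂ) = 1 := by push_cast; exact h
  exact_mod_cast this

end Entropy

section Klein

lemma scalar_klein {K M : Type*} [Fintype K] [Fintype M]
    (r : K → ℝ) (a : M → ℝ) (c : K → M → ℝ)
    (hr : ∀ k, 0 ≤ r k) (hrs : ∑ k, r k = 1)
    (ha : ∀ m, 0 ≤ a m) (hc : ∀ k m, 0 ≤ c k m)
    (hc1 : ∀ k, ∑ m, c k m = 1) (hc2 : ∀ m, ∑ k, c k m ≤ 1)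
    (has : ∑ m, a m ≤ 1)
    (hsupp : ∀ k m, a m = 0 → r k * c k m = 0) :
    ∑ k, ∑ m, r k * c k m * Real.log (a m) ≤ ∑ k, r k * Real.log (r k) := by
  have key : ∀ k m, r k * c k m * Real.log (a m)
      ≤ r k * c k m * Real.log (r k) + (c k m * a m - r k * c k m) := by
    intro k m
    rcases eq_or_ne (r k * c k m) 0 with h | h
    · rw [h, zero_mul, zero_mul]
      nlinarith [mul_nonneg (hc k m) (ha m)]
    · have hrk : 0 < r k := (hr k).lt_of_ne fun e => h (by rw [← e, zero_mul])
      have ham : 0 < a m := by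
        rcases (ha m).lt_or_eq with h' | h'
        · exact h'
        · exact absurd (hsupp k m h'.symm) h
      have hpos : 0 < r k * c k m := (mul_nonneg (hr k) (hc k m)).lt_of_ne (Ne.symm h)
      have hlog : Real.log (a m) - Real.log (r k) ≤ a m / r k - 1 := by
        rw [← Real.log_div ham.ne' hrk.ne']
        exact Real.log_le_sub_one_of_pos (div_pos ham hrk)
      have h2 := mul_le_mul_of_nonneg_left hlog hpos.le
      have he : r k * c k m * (a m / r k - 1) = c k m * a m - r k * c k m := by
        field_simp
      nlinarith [h2, he]
  have step : ∑ k, ∑ m, r k * c k m * Real.log (a m)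
      ≤ ∑ k, ∑ m, (r k * c k m * Real.log (r k) + (c k m * a m - r k * c k m)) :=
    Finset.sum_le_sum fun k _ => Finset.sum_le_sum fun m _ => key k m
  have A1 : ∑ k, ∑ m, r k * c k m * Real.log (r k) = ∑ k, r k * Real.log (r k) := by
    refine Finset.sum_congr rfl fun k _ => ?_
    calc ∑ m, r k * c k m * Real.log (r k)
        = (∑ m, c k m) * (r k * Real.log (r k)) := by
          rw [Finset.sum_mul]; exact Finset.sum_congr rfl fun m _ => by ring
      _ = r k * Real.log (r k) := by rw [hc1 k, one_mul]
  have A2 : ∑ k, ∑ m, c k m * a m ≤ 1 := by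
    rw [Finset.sum_comm]
    calc ∑ m, ∑ k, c k m * a m = ∑ m, (∑ k, c k m) * a m :=
          Finset.sum_congr rfl fun m _ => (Finset.sum_mul _ _ _).symm
      _ ≤ ∑ m, a m := Finset.sum_le_sum fun m _ => mul_le_of_le_one_left (ha m) (hc2 m)
      _ ≤ 1 := has
  have A3 : ∑ k, ∑ m, r k * c k m = 1 := by
    calc ∑ k, ∑ m, r k * c k m = ∑ k, r k := by
          refine Finset.sum_congr rfl fun k _ => ?_
          rw [← Finset.mul_sum, hc1 k, mul_one]
      _ = 1 := hrs
  calc ∑ k, ∑ m, r k * c k m * Real.log (a m)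
      ≤ ∑ k, ∑ m, (r k * c k m * Real.log (r k) + (c k m * a m - r k * c k m)) := step
    _ = (∑ k, ∑ m, r k * c k m * Real.log (r k))
        + ((∑ k, ∑ m, c k m * a m) - (∑ k, ∑ m, r k * c k m)) := by
          simp [Finset.sum_add_distrib, Finset.sum_sub_distrib]
    _ ≤ ∑ k, r k * Real.log (r k) := by rw [A1, A3]; linarith [A2]

end Klein

section Subadd

variable {A B : Type*} [Fintype A] [DecidableEq A] [Fintype B] [DecidableEq B]

lemma star_kron (U : Matrix A A ℂ) (V : Matrix B B ℂ) :
    star (Matrix.kroneckerMap (· * ·) U V) = Matrix.kroneckerMap (· * ·) (star U) (star V) := by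
  ext x y
  simp only [Matrix.star_apply, Matrix.kroneckerMap_apply, star_mul']

lemma conj_diag_apply {ι : Type*} [Fintype ι] (M X : Matrix ι ι ℂ) (x : ι) :
    (star X * M * X) x x = ∑ y, ∑ z, star (X y x) * M y z * X z x := by
  calc (star X * M * X) x x = ∑ z, (∑ y, (star X) x y * M y z) * X z x := by
        simp [Matrix.mul_apply]
    _ = ∑ z, ∑ y, (star X) x y * M y z * X z x :=
        Finset.sum_congr rfl fun z _ => Finset.sum_mul _ _ _
    _ = ∑ y, ∑ z, star (X y x) * M y z * X z x := by
        rw [Finset.sum_comm]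
        exact Finset.sum_congr rfl fun y _ => Finset.sum_congr rfl fun z _ => by
          rw [Matrix.star_apply]

theorem vnEntropy_subadd
    {ω : Matrix (A × B) (A × B) ℂ} {ωA : Matrix A A ℂ} {ωB : Matrix B B ℂ}
    (hω : IsDensity ω) (hA : IsDensity ωA) (hB : IsDensity ωB)
    (hTrB : ∀ a a', ∑ b, ω (a, b) (a', b) = ωA a a')
    (hTrA : ∀ b b', ∑ a, ω (a, b) (a, b') = ωB b b') :
    vnEntropy ω ≤ vnEntropy ωA + vnEntropy ωB := by
  classical
  have hωH := hω.1.1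
  have hAH := hA.1.1
  have hBH := hB.1.1
  set r : A × B → ℝ := hωH.eigenvalues with hr_def
  set p : A → ℝ := hAH.eigenvalues with hp_def
  set q : B → ℝ := hBH.eigenvalues with hq_def
  set W : Matrix (A × B) (A × B) ℂ := (hωH.eigenvectorUnitary : Matrix (A × B) (A × B) ℂ) with hW_def
  set U : Matrix A A ℂ := (hAH.eigenvectorUnitary : Matrix A A ℂ) with hU_def
  set V : Matrix B B ℂ := (hBH.eigenvectorUnitary : Matrix B B ℂ) with hV_def
  have hWu : W ∈ Matrix.unitaryGroup (A × B) ℂ := hωH.eigenvectorUnitary.2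
  have hUu : U ∈ Matrix.unitaryGroup A ℂ := hAH.eigenvectorUnitary.2
  have hVu : V ∈ Matrix.unitaryGroup B ℂ := hBH.eigenvectorUnitary.2
  set G : Matrix (A × B) (A × B) ℂ := Matrix.kroneckerMap (· * ·) U V with hG_def
  have hGapp : ∀ (x y : A × B), G x y = U x.1 y.1 * V x.2 y.2 := fun x y => rfl
  have hGsG : star G * G = 1 := by
    rw [hG_def, star_kron, ← Matrix.mul_kronecker_mul,
      Matrix.mem_unitaryGroup_iff'.mp hUu, Matrix.mem_unitaryGroup_iff'.mp hVu,
      Matrix.one_kronecker_one]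
  have hGGs : G * star G = 1 := by
    rw [hG_def, star_kron, ← Matrix.mul_kronecker_mul,
      Matrix.mem_unitaryGroup_iff.mp hUu, Matrix.mem_unitaryGroup_iff.mp hVu,
      Matrix.one_kronecker_one]
  set T : Matrix (A × B) (A × B) ℂ := star G * W with hT_def
  have hsT : star T = star W * G := by rw [hT_def, StarMul.star_mul, star_star]
  have hTsT : T * star T = 1 := by
    rw [hT_def, hsT, Matrix.mul_assoc, ← Matrix.mul_assoc W (star W) G,
      Matrix.mem_unitaryGroup_iff.mp hWu, Matrix.one_mul, hGsG]
  have hsTT : star T * T = 1 := by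
    rw [hsT, hT_def, Matrix.mul_assoc, ← Matrix.mul_assoc G (star G) W,
      hGGs, Matrix.one_mul, Matrix.mem_unitaryGroup_iff'.mp hWu]
  set c : (A × B) → (A × B) → ℝ := fun k x => Complex.normSq (T x k) with hc_def
  set D2 : Matrix (A × B) (A × B) ℂ := star G * ω * G with hD2_def
  have hD2T : D2 = T * Matrix.diagonal (RCLike.ofReal ∘ r) * star T := by
    rw [hD2_def, hT_def, hsT]
    conv_lhs => rw [hωH.spectral_theorem, Unitary.conjStarAlgAut_apply]
    simp only [Matrix.mul_assoc]
    rfl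
  have hstarT_apply : ∀ k x, (star T) k x = star (T x k) := fun k x => rfl
  have hD2diag : ∀ x, D2 x x = ((∑ k, r k * c k x : ℝ) : ℂ) := by
    intro x
    rw [hD2T, Matrix.mul_apply]
    have hterm : ∀ k, ((T * Matrix.diagonal (RCLike.ofReal ∘ r) : Matrix (A × B) (A × B) ℂ)) x k * (star T) k x
        = ((r k * c k x : ℝ) : ℂ) := by
      intro k
      rw [Matrix.mul_diagonal, hstarT_apply]
      have h2 : T x k * star (T x k) = ((c k x : ℝ) : ℂ) := by
        rw [Complex.star_def, Complex.mul_conj]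
      have h3 : ((RCLike.ofReal ∘ r) k : ℂ) = ((r k : ℝ) : ℂ) := rfl
      calc T x k * (RCLike.ofReal ∘ r) k * star (T x k)
          = T x k * star (T x k) * ((r k : ℝ) : ℂ) := by rw [h3]; ring
        _ = ((r k * c k x : ℝ) : ℂ) := by rw [h2]; push_cast; ring
    rw [Finset.sum_congr rfl fun k _ => hterm k]
    norm_cast
  have hc1 : ∀ k, ∑ x, c k x = 1 := by
    intro k
    have h1 : (star T * T) k k = 1 := by rw [hsTT]; simp
    rw [Matrix.mul_apply] at h1
    have h2 : ∀ x, (star T) k x * T x k = ((Complex.normSq (T x k) : ℝ) : ℂ) := by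
      intro x
      rw [hstarT_apply, Complex.star_def, mul_comm, Complex.mul_conj]
    rw [Finset.sum_congr rfl fun x _ => h2 x] at h1
    have h3 : ((∑ x, Complex.normSq (T x k) : ℝ) : ℂ) = 1 := by push_cast; exact h1
    exact_mod_cast h3
  have hc2 : ∀ x, ∑ k, c k x = 1 := by
    intro x
    have h1 : (T * star T) x x = 1 := by rw [hTsT]; simp
    rw [Matrix.mul_apply] at h1
    have h2 : ∀ k, T x k * (star T) k x = ((Complex.normSq (T x k) : ℝ) : ℂ) := by
      intro k
      rw [hstarT_apply, Complex.star_def, Complex.mul_conj]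
    rw [Finset.sum_congr rfl fun k _ => h2 k] at h1
    have h3 : ((∑ k, Complex.normSq (T x k) : ℝ) : ℂ) = 1 := by push_cast; exact h1
    exact_mod_cast h3
  have expand : ∀ x : A × B, D2 x x = ∑ y, ∑ z, star (G y x) * ω y z * G z x :=
    fun x => conj_diag_apply ω G x
  have keyV : ∀ b b' : B, ∑ j, star (V b j) * V b' j = if b' = b then 1 else 0 := by
    intro b b'
    have h1 : (V * star V) b' b = (1 : Matrix B B ℂ) b' b := by
      rw [Matrix.mem_unitaryGroup_iff.mp hVu]
    rw [Matrix.mul_apply, Matrix.one_apply] at h1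
    rw [← h1]
    exact Finset.sum_congr rfl fun j _ => mul_comm _ _
  have keyU : ∀ a a' : A, ∑ i, star (U a i) * U a' i = if a' = a then 1 else 0 := by
    intro a a'
    have h1 : (U * star U) a' a = (1 : Matrix A A ℂ) a' a := by
      rw [Matrix.mem_unitaryGroup_iff.mp hUu]
    rw [Matrix.mul_apply, Matrix.one_apply] at h1
    rw [← h1]
    exact Finset.sum_congr rfl fun j _ => mul_comm _ _
  have hdiagA : ∀ i, (star U * ωA * U) i i = ((p i : ℝ) : ℂ) := by
    intro i
    rw [show star U * ωA * U = diagonal (RCLike.ofReal ∘ hAH.eigenvalues) by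
      simpa using Matrix.IsHermitian.conjStarAlgAut_star_eigenvectorUnitary hAH]
    simp [Matrix.diagonal_apply_eq, RCLike.ofReal_alg]
    rfl
  have hdiagB : ∀ j, (star V * ωB * V) j j = ((q j : ℝ) : ℂ) := by
    intro j
    rw [show star V * ωB * V = diagonal (RCLike.ofReal ∘ hBH.eigenvalues) by
      simpa using Matrix.IsHermitian.conjStarAlgAut_star_eigenvectorUnitary hBH]
    simp [Matrix.diagonal_apply_eq, RCLike.ofReal_alg]
    rfl
  have margA : ∀ i : A, ∑ j, D2 (i, j) (i, j) = ((p i : ℝ) : ℂ) := by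
    intro i
    calc ∑ j, D2 (i, j) (i, j)
        = ∑ j, ∑ y, ∑ z, star (G y (i, j)) * ω y z * G z (i, j) :=
          Finset.sum_congr rfl fun j _ => expand (i, j)
      _ = ∑ y, ∑ z, ∑ j, star (G y (i, j)) * ω y z * G z (i, j) := by
          rw [Finset.sum_comm]
          exact Finset.sum_congr rfl fun y _ => Finset.sum_comm
      _ = ∑ y : A × B, ∑ z : A × B,
            (if z.2 = y.2 then (1 : ℂ) else 0) * (star (U y.1 i) * ω y z * U z.1 i) := by
          refine Finset.sum_congr rfl fun y _ => Finset.sum_congr rfl fun z _ => ?_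
          rw [← keyV y.2 z.2, Finset.sum_mul]
          refine Finset.sum_congr rfl fun j _ => ?_
          simp only [hGapp, star_mul']
          ring
      _ = ∑ y : A × B, ∑ z' : A, star (U y.1 i) * ω y (z', y.2) * U z' i := by
          refine Finset.sum_congr rfl fun y _ => ?_
          rw [Fintype.sum_prod_type]
          refine Finset.sum_congr rfl fun z' _ => ?_
          simp
      _ = ∑ a, ∑ a', star (U a i) * ωA a a' * U a' i := by
          rw [Fintype.sum_prod_type]
          refine Finset.sum_congr rfl fun a _ => ?_
          rw [Finset.sum_comm]
          refine Finset.sum_congr rfl fun a' _ => ?_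
          have h1 : ∀ b, star (U a i) * ω (a, b) (a', b) * U a' i
              = ω (a, b) (a', b) * (star (U a i) * U a' i) := fun b => by ring
          rw [Finset.sum_congr rfl fun b _ => h1 b, ← Finset.sum_mul, hTrB a a']
          ring
      _ = (star U * ωA * U) i i := (conj_diag_apply ωA U i).symm
      _ = ((p i : ℝ) : ℂ) := hdiagA i
  have margB : ∀ j : B, ∑ i, D2 (i, j) (i, j) = ((q j : ℝ) : ℂ) := by
    intro j
    calc ∑ i, D2 (i, j) (i, j)
        = ∑ i, ∑ y, ∑ z, star (G y (i, j)) * ω y z * G z (i, j) :=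
          Finset.sum_congr rfl fun i _ => expand (i, j)
      _ = ∑ y, ∑ z, ∑ i, star (G y (i, j)) * ω y z * G z (i, j) := by
          rw [Finset.sum_comm]
          exact Finset.sum_congr rfl fun y _ => Finset.sum_comm
      _ = ∑ y : A × B, ∑ z : A × B,
            (if z.1 = y.1 then (1 : ℂ) else 0) * (star (V y.2 j) * ω y z * V z.2 j) := by
          refine Finset.sum_congr rfl fun y _ => Finset.sum_congr rfl fun z _ => ?_
          rw [← keyU y.1 z.1, Finset.sum_mul]
          refine Finset.sum_congr rfl fun i _ => ?_
          simp only [hGapp, star_mul']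
          ring
      _ = ∑ y : A × B, ∑ b' : B, star (V y.2 j) * ω y (y.1, b') * V b' j := by
          refine Finset.sum_congr rfl fun y _ => ?_
          rw [Fintype.sum_prod_type, Finset.sum_comm]
          refine Finset.sum_congr rfl fun b' _ => ?_
          simp
      _ = ∑ b, ∑ b', star (V b j) * ωB b b' * V b' j := by
          rw [Fintype.sum_prod_type, Finset.sum_comm]
          refine Finset.sum_congr rfl fun b _ => ?_
          rw [Finset.sum_comm]
          refine Finset.sum_congr rfl fun b' _ => ?_
          have h1 : ∀ a, star (V b j) * ω (a, b) (a, b') * V b' j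
              = ω (a, b) (a, b') * (star (V b j) * V b' j) := fun a => by ring
          rw [Finset.sum_congr rfl fun a _ => h1 a, ← Finset.sum_mul, hTrA b b']
          ring
      _ = (star V * ωB * V) j j := (conj_diag_apply ωB V j).symm
      _ = ((q j : ℝ) : ℂ) := hdiagB j
  -- real marginals
  have margA' : ∀ i, ∑ j, ∑ k, r k * c k (i, j) = p i := by
    intro i
    have h1 : ((∑ j, ∑ k, r k * c k (i, j) : ℝ) : ℂ) = ((p i : ℝ) : ℂ) := by
      rw [← margA i]
      rw [Finset.sum_congr rfl fun j (_ : j ∈ Finset.univ) => hD2diag (i, j)]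
      push_cast
      rfl
    exact_mod_cast h1
  have margB' : ∀ j, ∑ i, ∑ k, r k * c k (i, j) = q j := by
    intro j
    have h1 : ((∑ i, ∑ k, r k * c k (i, j) : ℝ) : ℂ) = ((q j : ℝ) : ℂ) := by
      rw [← margB j]
      rw [Finset.sum_congr rfl fun i (_ : i ∈ Finset.univ) => hD2diag (i, j)]
      push_cast
      rfl
    exact_mod_cast h1
  -- basic positivity
  have hrpos : ∀ k, 0 ≤ r k := fun k => hω.1.eigenvalues_nonneg k
  have hppos : ∀ i, 0 ≤ p i := fun i => hA.1.eigenvalues_nonneg i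
  have hqpos : ∀ j, 0 ≤ q j := fun j => hB.1.eigenvalues_nonneg j
  have hcpos : ∀ k x, (0 : ℝ) ≤ c k x := fun k x => Complex.normSq_nonneg _
  have hrsum : ∑ k, r k = 1 := density_sum_eigenvalues hω
  have hpsum : ∑ i, p i = 1 := density_sum_eigenvalues hA
  have hqsum : ∑ j, q j = 1 := density_sum_eigenvalues hB
  -- support conditions
  have hsuppA : ∀ i, p i = 0 → ∀ k j, r k * c k (i, j) = 0 := by
    intro i hpi k j
    have h0 : ∑ j, ∑ k, r k * c k (i, j) = 0 := by rw [margA' i, hpi]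
    have hnn : ∀ j' ∈ Finset.univ, (0 : ℝ) ≤ ∑ k, r k * c k (i, j') :=
      fun j' _ => Finset.sum_nonneg fun k _ => mul_nonneg (hrpos k) (hcpos k _)
    have h1 : ∑ k, r k * c k (i, j) = 0 :=
      (Finset.sum_eq_zero_iff_of_nonneg hnn).mp h0 j (Finset.mem_univ j)
    exact (Finset.sum_eq_zero_iff_of_nonneg
      fun k _ => mul_nonneg (hrpos k) (hcpos k _)).mp h1 k (Finset.mem_univ k)
  have hsuppB : ∀ j, q j = 0 → ∀ k i, r k * c k (i, j) = 0 := by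
    intro j hqj k i
    have h0 : ∑ i, ∑ k, r k * c k (i, j) = 0 := by rw [margB' j, hqj]
    have hnn : ∀ i' ∈ Finset.univ, (0 : ℝ) ≤ ∑ k, r k * c k (i', j) :=
      fun i' _ => Finset.sum_nonneg fun k _ => mul_nonneg (hrpos k) (hcpos k _)
    have h1 : ∑ k, r k * c k (i, j) = 0 :=
      (Finset.sum_eq_zero_iff_of_nonneg hnn).mp h0 i (Finset.mem_univ i)
    exact (Finset.sum_eq_zero_iff_of_nonneg
      fun k _ => mul_nonneg (hrpos k) (hcpos k _)).mp h1 k (Finset.mem_univ k)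
  -- apply Klein
  set a : A × B → ℝ := fun x => p x.1 * q x.2 with ha_def
  have klein := scalar_klein r a c hrpos hrsum
    (fun x => mul_nonneg (hppos x.1) (hqpos x.2)) hcpos hc1
    (fun x => le_of_eq (hc2 x))
    (by
      rw [Fintype.sum_prod_type]
      calc ∑ i, ∑ j, p i * q j = ∑ i, p i * ∑ j, q j :=
            Finset.sum_congr rfl fun i _ => (Finset.mul_sum _ _ _).symm
        _ ≤ 1 := by rw [hqsum]; simp [hpsum])
    (by
      intro k x hx
      rcases mul_eq_zero.mp hx with h | h
      · exact hsuppA x.1 h k x.2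
      · exact hsuppB x.2 h k x.1)
  -- rewrite the log of products
  have hlogsplit : ∑ k, ∑ x : A × B, r k * c k x * Real.log (a x)
      = (∑ k, ∑ x : A × B, r k * c k x * Real.log (p x.1))
        + (∑ k, ∑ x : A × B, r k * c k x * Real.log (q x.2)) := by
    rw [← Finset.sum_add_distrib]
    refine Finset.sum_congr rfl fun k _ => ?_
    rw [← Finset.sum_add_distrib]
    refine Finset.sum_congr rfl fun x _ => ?_
    rcases eq_or_ne (a x) 0 with h | h
    · have h0 : r k * c k x = 0 := by
        rcases mul_eq_zero.mp h with h' | h'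
        · exact hsuppA x.1 h' k x.2
        · exact hsuppB x.2 h' k x.1
      rw [h0]; ring
    · have hpx : p x.1 ≠ 0 := fun e => h (by rw [ha_def]; simp [e])
      have hqx : q x.2 ≠ 0 := fun e => h (by rw [ha_def]; simp [e])
      rw [ha_def]
      show r k * c k x * Real.log (p x.1 * q x.2) = _
      rw [Real.log_mul hpx hqx]
      ring
  have hsumP : ∑ k, ∑ x : A × B, r k * c k x * Real.log (p x.1)
      = ∑ i, p i * Real.log (p i) := by
    rw [Finset.sum_comm]
    calc ∑ x : A × B, ∑ k, r k * c k x * Real.log (p x.1)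
        = ∑ x : A × B, (∑ k, r k * c k x) * Real.log (p x.1) :=
          Finset.sum_congr rfl fun x _ => (Finset.sum_mul _ _ _).symm
      _ = ∑ i, ∑ j, (∑ k, r k * c k (i, j)) * Real.log (p i) := by
          rw [Fintype.sum_prod_type]
      _ = ∑ i, p i * Real.log (p i) := by
          refine Finset.sum_congr rfl fun i _ => ?_
          rw [← Finset.sum_mul, margA' i]
  have hsumQ : ∑ k, ∑ x : A × B, r k * c k x * Real.log (q x.2)
      = ∑ j, q j * Real.log (q j) := by
    rw [Finset.sum_comm]
    calc ∑ x : A × B, ∑ k, r k * c k x * Real.log (q x.2)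
        = ∑ x : A × B, (∑ k, r k * c k x) * Real.log (q x.2) :=
          Finset.sum_congr rfl fun x _ => (Finset.sum_mul _ _ _).symm
      _ = ∑ j, ∑ i, (∑ k, r k * c k (i, j)) * Real.log (q j) := by
          rw [Fintype.sum_prod_type, Finset.sum_comm]
      _ = ∑ j, q j * Real.log (q j) := by
          refine Finset.sum_congr rfl fun j _ => ?_
          rw [← Finset.sum_mul, margB' j]
  have main : ∑ i, p i * Real.log (p i) + ∑ j, q j * Real.log (q j)
      ≤ ∑ k, r k * Real.log (r k) := by
    rw [← hsumP, ← hsumQ, ← hlogsplit]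
    exact klein
  -- entropies
  rw [vnEntropy_eq hωH, vnEntropy_eq hAH, vnEntropy_eq hBH, ← add_div]
  have hlog2 : (0 : ℝ) < Real.log 2 := Real.log_pos (by norm_num)
  have e1 : ∑ k, Real.negMulLog (r k) = -∑ k, r k * Real.log (r k) := by
    simp [Real.negMulLog_eq_neg]
  have e2 : ∑ i, Real.negMulLog (p i) = -∑ i, p i * Real.log (p i) := by
    simp [Real.negMulLog_eq_neg]
  have e3 : ∑ j, Real.negMulLog (q j) = -∑ j, q j * Real.log (q j) := by
    simp [Real.negMulLog_eq_neg]
  have hnum : ∑ k, Real.negMulLog (r k)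
      ≤ ∑ i, Real.negMulLog (p i) + ∑ j, Real.negMulLog (q j) := by
    rw [e1, e2, e3]; linarith [main]
  exact div_le_div_of_nonneg_right hnum hlog2.le

end Subadd

section KronEntropy

variable {A B : Type*} [Fintype A] [DecidableEq A] [Fintype B] [DecidableEq B]

lemma kron_density {ρ : Matrix A A ℂ} {τ : Matrix B B ℂ}
    (hρ : IsDensity ρ) (hτ : IsDensity τ) :
    IsDensity (Matrix.kroneckerMap (· * ·) ρ τ) := by
  constructor
  · exact Matrix.PosSemidef.kronecker hρ.1 hτ.1
  · rw [Matrix.trace_kronecker, hρ.2, hτ.2, mul_one]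

lemma kron_unitary {U : Matrix A A ℂ} {V : Matrix B B ℂ}
    (hU : U ∈ Matrix.unitaryGroup A ℂ) (hV : V ∈ Matrix.unitaryGroup B ℂ) :
    Matrix.kroneckerMap (· * ·) U V ∈ Matrix.unitaryGroup (A × B) ℂ := by
  rw [Matrix.mem_unitaryGroup_iff, star_kron, ← Matrix.mul_kronecker_mul,
    Matrix.mem_unitaryGroup_iff.mp hU, Matrix.mem_unitaryGroup_iff.mp hV,
    Matrix.one_kronecker_one]

lemma vnEntropy_kron {ρ : Matrix A A ℂ} {τ : Matrix B B ℂ}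
    (hρ : IsDensity ρ) (hτ : IsDensity τ) :
    vnEntropy (Matrix.kroneckerMap (· * ·) ρ τ) = vnEntropy ρ + vnEntropy τ := by
  have hρH := hρ.1.1
  have hτH := hτ.1.1
  have hkH := (kron_density hρ hτ).1.1
  set p : A → ℝ := hρH.eigenvalues with hp_def
  set q : B → ℝ := hτH.eigenvalues with hq_def
  set U : Matrix A A ℂ := (hρH.eigenvectorUnitary : Matrix A A ℂ) with hU_def
  set V : Matrix B B ℂ := (hτH.eigenvectorUnitary : Matrix B B ℂ) with hV_def
  set d : A × B → ℝ := fun x => p x.1 * q x.2 with hd_def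
  have hdecomp : Matrix.kroneckerMap (· * ·) ρ τ
      = (Matrix.kroneckerMap (· * ·) U V) * Matrix.diagonal (RCLike.ofReal ∘ d)
        * star (Matrix.kroneckerMap (· * ·) U V) := by
    conv_lhs => rw [hρH.spectral_theorem, hτH.spectral_theorem, Unitary.conjStarAlgAut_apply,
      Unitary.conjStarAlgAut_apply]
    rw [Matrix.mul_kronecker_mul, Matrix.mul_kronecker_mul,
      Matrix.diagonal_kronecker_diagonal, ← star_kron]
    have hdg : (fun mn : A × B => ((RCLike.ofReal : ℝ → ℂ) ∘ p) mn.1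
          * ((RCLike.ofReal : ℝ → ℂ) ∘ q) mn.2)
        = ((RCLike.ofReal : ℝ → ℂ) ∘ d) := by
      funext x
      exact (RCLike.ofReal_mul (p x.1) (q x.2)).symm
    rw [hdg]
  have hch : (Matrix.kroneckerMap (· * ·) ρ τ).charpoly
      = ∏ x : A × B, (Polynomial.X - Polynomial.C ((d x : ℂ))) := by
    rw [hdecomp, charpoly_conj_unitary (kron_unitary hρH.eigenvectorUnitary.2
      hτH.eigenvectorUnitary.2), charpoly_diagonal]
    rfl
  have hsum := sum_f_eigenvalues hkH d hch Real.negMulLog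
  have hpsum : ∑ i, p i = 1 := density_sum_eigenvalues hρ
  have hqsum : ∑ j, q j = 1 := density_sum_eigenvalues hτ
  rw [vnEntropy_eq hkH, vnEntropy_eq hρH, vnEntropy_eq hτH, ← add_div]
  rw [hsum]
  congr 1
  calc ∑ x : A × B, Real.negMulLog (d x)
      = ∑ i, ∑ j, (q j * Real.negMulLog (p i) + p i * Real.negMulLog (q j)) := by
        rw [Fintype.sum_prod_type]
        exact Finset.sum_congr rfl fun i _ => Finset.sum_congr rfl fun j _ =>
          Real.negMulLog_mul (p i) (q j)
    _ = ∑ i, (Real.negMulLog (p i) + p i * ∑ j, Real.negMulLog (q j)) := by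
        refine Finset.sum_congr rfl fun i _ => ?_
        rw [Finset.sum_add_distrib, ← Finset.sum_mul, ← Finset.mul_sum, hqsum, one_mul]
    _ = ∑ i, Real.negMulLog (p i) + ∑ j, Real.negMulLog (q j) := by
        rw [Finset.sum_add_distrib, ← Finset.sum_mul, hpsum, one_mul]

end KronEntropy

section Reindex

variable {ι κ : Type*} [Fintype ι] [DecidableEq ι] [Fintype κ] [DecidableEq κ]

lemma vnEntropy_submatrix {M : Matrix ι ι ℂ} (hM : M.IsHermitian) (e : κ ≃ ι) :
    vnEntropy (M.submatrix e e) = vnEntropy M := by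
  have hMe : (M.submatrix e e).IsHermitian := hM.submatrix e
  have hch : (M.submatrix e e).charpoly
      = ∏ i : ι, (Polynomial.X - Polynomial.C ((hM.eigenvalues i : ℂ))) := by
    have h1 : M.submatrix (⇑e) (⇑e) = (Matrix.reindex e.symm e.symm) M := rfl
    rw [h1, Matrix.charpoly_reindex]
    conv_lhs => rw [hM.spectral_theorem, Unitary.conjStarAlgAut_apply]
    rw [charpoly_conj_unitary hM.eigenvectorUnitary.2, charpoly_diagonal]
    rfl
  rw [vnEntropy_eq hMe, vnEntropy_eq hM,
    sum_f_eigenvalues hMe hM.eigenvalues hch Real.negMulLog]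

lemma density_submatrix {M : Matrix ι ι ℂ} (hM : IsDensity M) (e : κ ≃ ι) :
    IsDensity (M.submatrix e e) := by
  refine ⟨hM.1.submatrix e, ?_⟩
  have h1 : (M.submatrix e e).trace = ∑ k, M (e k) (e k) := rfl
  rw [h1, Equiv.sum_comp e (fun i => M i i)]
  exact hM.2

lemma vnEntropy_unique [Unique ι] {M : Matrix ι ι ℂ}
    (hM : M.IsHermitian) (htr : M.trace = 1) : vnEntropy M = 0 := by
  have h := (trace_eq_sum_eigenvalues hM).symm.trans htr
  rw [Fintype.sum_unique] at h
  have h1 : hM.eigenvalues default = 1 := by exact_mod_cast h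
  rw [vnEntropy_eq hM, Fintype.sum_unique, h1]
  simp

end Reindex

section Mix

variable {ι : Type*} [Fintype ι] [DecidableEq ι]

lemma posSemidef_real_smul {M : Matrix ι ι ℂ} (hM : M.PosSemidef) {c : ℝ} (hc : 0 ≤ c) :
    (c • M).PosSemidef := by
  rw [Matrix.posSemidef_iff_dotProduct_mulVec]
  constructor
  · have h1 : (c • M)ᴴ = c • Mᴴ := by
      rw [Matrix.conjTranspose_smul, star_trivial]
    rw [Matrix.IsHermitian, h1, hM.1]
  · intro x
    have h1 : (c • M) *ᵥ x = c • (M *ᵥ x) := Matrix.smul_mulVec c M x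
    rw [h1, dotProduct_smul]
    have h2 := (Matrix.posSemidef_iff_dotProduct_mulVec.mp hM).2 x
    have h3 : (0 : ℂ) ≤ (c : ℂ) := by exact_mod_cast hc
    calc (0 : ℂ) = (c : ℂ) * 0 := by ring
      _ ≤ (c : ℂ) * (dotProduct (star x) (M *ᵥ x)) := by
          exact mul_le_mul_of_nonneg_left h2 h3
      _ = c • (dotProduct (star x) (M *ᵥ x)) := by
          rw [Complex.real_smul]

lemma mix_density {N : ℕ} (p : Fin N → ℝ) (hp : ∀ α, 0 ≤ p α)
    (hpsum : ∑ α, p α = 1) (ρ : Fin N → Matrix ι ι ℂ) (hρ : ∀ α, IsDensity (ρ α)) :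
    IsDensity (∑ α, p α • ρ α) := by
  constructor
  · refine Finset.sum_induction _ _ (fun a b ha hb => ha.add hb)
      (Matrix.PosSemidef.zero) ?_
    intro α _
    exact posSemidef_real_smul (hρ α).1 (hp α)
  · rw [Matrix.trace_sum]
    have h1 : ∀ α, (p α • ρ α).trace = ((p α : ℝ) : ℂ) := by
      intro α
      rw [Matrix.trace_smul, (hρ α).2, Complex.real_smul, mul_one]
    rw [Finset.sum_congr rfl fun α _ => h1 α]
    push_cast
    exact_mod_cast congrArg (Complex.ofReal) hpsum

end Mix

section Pair

variable {A B : Type*} [Fintype A] [DecidableEq A] [Fintype B] [DecidableEq B]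

lemma holevo_pair {N : ℕ} (p : Fin N → ℝ) (hp : ∀ α, 0 ≤ p α) (hpsum : ∑ α, p α = 1)
    (ρ : Fin N → Matrix A A ℂ) (τ : Fin N → Matrix B B ℂ)
    (hρ : ∀ α, IsDensity (ρ α)) (hτ : ∀ α, IsDensity (τ α)) :
    vnEntropy (∑ α, p α • Matrix.kroneckerMap (· * ·) (ρ α) (τ α))
      - ∑ α, p α * vnEntropy (Matrix.kroneckerMap (· * ·) (ρ α) (τ α))
    ≤ (vnEntropy (∑ α, p α • ρ α) - ∑ α, p α * vnEntropy (ρ α))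
      + (vnEntropy (∑ α, p α • τ α) - ∑ α, p α * vnEntropy (τ α)) := by
  have hωd : IsDensity (∑ α, p α • Matrix.kroneckerMap (· * ·) (ρ α) (τ α)) :=
    mix_density p hp hpsum _ (fun α => kron_density (hρ α) (hτ α))
  have hAd : IsDensity (∑ α, p α • ρ α) := mix_density p hp hpsum _ hρ
  have hBd : IsDensity (∑ α, p α • τ α) := mix_density p hp hpsum _ hτ
  have hTrB : ∀ a a', ∑ b, (∑ α, p α • Matrix.kroneckerMap (· * ·) (ρ α) (τ α)) (a, b) (a', b)
      = (∑ α, p α • ρ α) a a' := by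
    intro a a'
    simp only [Matrix.sum_apply, Matrix.smul_apply, Matrix.kroneckerMap_apply]
    rw [Finset.sum_comm]
    refine Finset.sum_congr rfl fun α _ => ?_
    rw [← Finset.smul_sum, ← Finset.mul_sum]
    have htr : ∑ b, τ α b b = 1 := (hτ α).2
    rw [htr, mul_one]
  have hTrA : ∀ b b', ∑ a, (∑ α, p α • Matrix.kroneckerMap (· * ·) (ρ α) (τ α)) (a, b) (a, b')
      = (∑ α, p α • τ α) b b' := by
    intro b b'
    simp only [Matrix.sum_apply, Matrix.smul_apply, Matrix.kroneckerMap_apply]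
    rw [Finset.sum_comm]
    refine Finset.sum_congr rfl fun α _ => ?_
    rw [← Finset.smul_sum, ← Finset.sum_mul]
    have htr : ∑ a, ρ α a a = 1 := (hρ α).2
    rw [htr, one_mul]
  have hsub := vnEntropy_subadd hωd hAd hBd hTrB hTrA
  have hsplit : ∑ α, p α * vnEntropy (Matrix.kroneckerMap (· * ·) (ρ α) (τ α))
      = ∑ α, p α * vnEntropy (ρ α) + ∑ α, p α * vnEntropy (τ α) := by
    rw [← Finset.sum_add_distrib]
    refine Finset.sum_congr rfl fun α _ => ?_
    rw [vnEntropy_kron (hρ α) (hτ α)]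
    ring
  linarith [hsub, hsplit]

end Pair

section ProdState

set_option maxHeartbeats 1000000 in
lemma prodState : ∀ {n : ℕ} (d : Fin n → ℕ)
    (σ : (k : Fin n) → Matrix (Fin (d k)) (Fin (d k)) ℂ),
    (∀ k, IsDensity (σ k)) →
    IsDensity (Matrix.of fun f g : (k : Fin n) → Fin (d k) => ∏ k, σ k (f k) (g k)) ∧
    vnEntropy (Matrix.of fun f g : (k : Fin n) → Fin (d k) => ∏ k, σ k (f k) (g k))
      = ∑ k, vnEntropy (σ k) := by
  intro n
  induction n with
  | zero =>
    intro d σ hσ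
    have h1 : (Matrix.of fun f g : (k : Fin 0) → Fin (d k) => ∏ k, σ k (f k) (g k))
        = (1 : Matrix _ _ ℂ) := by
      ext f g
      have : f = g := Subsingleton.elim f g
      subst this
      simp [Matrix.one_apply_eq]
    rw [h1]
    have htr : (1 : Matrix ((k : Fin 0) → Fin (d k)) ((k : Fin 0) → Fin (d k)) ℂ).trace = 1 := by
      rw [Matrix.trace_one]
      simp
    refine ⟨⟨Matrix.PosSemidef.one, htr⟩, ?_⟩
    rw [vnEntropy_unique Matrix.isHermitian_one htr]
    simp
  | succ n IH =>
    intro d σ hσ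
    set E := Fin.consEquiv (fun k : Fin (n + 1) => Fin (d k)) with hE_def
    have IH' := IH (fun k => d k.succ) (fun k => σ k.succ) (fun k => hσ k.succ)
    set M' := Matrix.of fun f g : (k : Fin n) → Fin (d k.succ) =>
      ∏ k, σ k.succ (f k) (g k) with hM'_def
    have hM : (Matrix.of fun f g : (k : Fin (n + 1)) → Fin (d k) => ∏ k, σ k (f k) (g k))
        = (Matrix.kroneckerMap (· * ·) (σ 0) M').submatrix E.symm E.symm := by
      ext f g
      simp only [Matrix.submatrix_apply, Matrix.kroneckerMap_apply, Matrix.of_apply]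
      rw [Fin.prod_univ_succ]
      rfl
    have hkrond : IsDensity (Matrix.kroneckerMap (· * ·) (σ 0) M') :=
      kron_density (hσ 0) IH'.1
    constructor
    · rw [hM]
      exact density_submatrix hkrond E.symm
    · rw [hM, vnEntropy_submatrix hkrond.1.1 E.symm, vnEntropy_kron (hσ 0) IH'.1, IH'.2,
        Fin.sum_univ_succ]

end ProdState

section Main

set_option maxHeartbeats 1000000 in
lemma holevo_main {N : ℕ} (p : Fin N → ℝ) (hp : ∀ α, 0 ≤ p α) (hpsum : ∑ α, p α = 1) :
    ∀ {n : ℕ} (d : Fin n → ℕ)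
    (σ : Fin N → (k : Fin n) → Matrix (Fin (d k)) (Fin (d k)) ℂ),
    (∀ α k, IsDensity (σ α k)) →
    vnEntropy (∑ α, p α •
        (Matrix.of fun f g : (k : Fin n) → Fin (d k) => ∏ k, σ α k (f k) (g k)))
      - ∑ α, p α * vnEntropy
        (Matrix.of fun f g : (k : Fin n) → Fin (d k) => ∏ k, σ α k (f k) (g k))
    ≤ ∑ k, (vnEntropy (∑ α, p α • σ α k) - ∑ α, p α * vnEntropy (σ α k)) := by
  intro n
  induction n with
  | zero =>
    intro d σ hσ
    have h1 : ∀ α, (Matrix.of fun f g : (k : Fin 0) → Fin (d k) => ∏ k, σ α k (f k) (g k))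
        = (1 : Matrix _ _ ℂ) := by
      intro α
      ext f g
      have : f = g := Subsingleton.elim f g
      subst this
      simp [Matrix.one_apply_eq]
    have htr : (1 : Matrix ((k : Fin 0) → Fin (d k)) ((k : Fin 0) → Fin (d k)) ℂ).trace = 1 := by
      rw [Matrix.trace_one]
      simp
    have h0 : vnEntropy (1 : Matrix ((k : Fin 0) → Fin (d k)) ((k : Fin 0) → Fin (d k)) ℂ) = 0 :=
      vnEntropy_unique Matrix.isHermitian_one htr
    have hmix : (∑ α, p α • (1 : Matrix ((k : Fin 0) → Fin (d k)) ((k : Fin 0) → Fin (d k)) ℂ))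
        = 1 := by
      rw [← Finset.sum_smul, hpsum, one_smul]
    have hLHS1 : (∑ α, p α •
          (Matrix.of fun f g : (k : Fin 0) → Fin (d k) => ∏ k, σ α k (f k) (g k))) = 1 := by
      rw [Finset.sum_congr rfl fun α _ => by rw [h1 α]]
      exact hmix
    have hLHS2 : ∀ α, vnEntropy
          (Matrix.of fun f g : (k : Fin 0) → Fin (d k) => ∏ k, σ α k (f k) (g k)) = 0 :=
      fun α => by rw [h1 α]; exact h0
    rw [hLHS1, h0, Finset.sum_congr rfl fun α _ => by rw [hLHS2 α]]
    simp
  | succ n IH =>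
    intro d σ hσ
    set E := Fin.consEquiv (fun k : Fin (n + 1) => Fin (d k)) with hE_def
    set M' := fun α => Matrix.of fun f g : (k : Fin n) → Fin (d k.succ) =>
      ∏ k, σ α k.succ (f k) (g k) with hM'_def
    have hM'd : ∀ α, IsDensity (M' α) := fun α =>
      (prodState (fun k => d k.succ) (fun k => σ α k.succ) (fun k => hσ α k.succ)).1
    have hM : ∀ α, (Matrix.of fun f g : (k : Fin (n + 1)) → Fin (d k) => ∏ k, σ α k (f k) (g k))
        = (Matrix.kroneckerMap (· * ·) (σ α 0) (M' α)).submatrix E.symm E.symm := by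
      intro α
      ext f g
      simp only [Matrix.submatrix_apply, Matrix.kroneckerMap_apply, Matrix.of_apply]
      rw [Fin.prod_univ_succ]
      rfl
    have hkrond : ∀ α, IsDensity (Matrix.kroneckerMap (· * ·) (σ α 0) (M' α)) := fun α =>
      kron_density (hσ α 0) (hM'd α)
    have hmixd : IsDensity (∑ α, p α • Matrix.kroneckerMap (· * ·) (σ α 0) (M' α)) :=
      mix_density p hp hpsum _ hkrond
    have hmixE : (∑ α, p α •
          (Matrix.of fun f g : (k : Fin (n + 1)) → Fin (d k) => ∏ k, σ α k (f k) (g k)))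
        = (∑ α, p α • Matrix.kroneckerMap (· * ·) (σ α 0) (M' α)).submatrix E.symm E.symm := by
      ext f g
      simp only [Matrix.sum_apply, Matrix.smul_apply, Matrix.submatrix_apply]
      refine Finset.sum_congr rfl fun α _ => ?_
      rw [hM α]
      rfl
    have e1 : vnEntropy (∑ α, p α •
          (Matrix.of fun f g : (k : Fin (n + 1)) → Fin (d k) => ∏ k, σ α k (f k) (g k)))
        = vnEntropy (∑ α, p α • Matrix.kroneckerMap (· * ·) (σ α 0) (M' α)) := by
      rw [hmixE]
      exact vnEntropy_submatrix hmixd.1.1 E.symm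
    have e2 : ∀ α, vnEntropy
          (Matrix.of fun f g : (k : Fin (n + 1)) → Fin (d k) => ∏ k, σ α k (f k) (g k))
        = vnEntropy (Matrix.kroneckerMap (· * ·) (σ α 0) (M' α)) := by
      intro α
      rw [hM α]
      exact vnEntropy_submatrix (hkrond α).1.1 E.symm
    have hpair := holevo_pair p hp hpsum (fun α => σ α 0) M' (fun α => hσ α 0) hM'd
    have hIH := IH (fun k => d k.succ) (fun α k => σ α k.succ) (fun α k => hσ α k.succ)
    have hsum2 : (∑ α, p α * vnEntropy
          (Matrix.of fun f g : (k : Fin (n + 1)) → Fin (d k) => ∏ k, σ α k (f k) (g k)))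
        = ∑ α, p α * vnEntropy (Matrix.kroneckerMap (· * ·) (σ α 0) (M' α)) :=
      Finset.sum_congr rfl fun α _ => by rw [e2 α]
    rw [e1, hsum2, Fin.sum_univ_succ]
    calc vnEntropy (∑ α, p α • Matrix.kroneckerMap (· * ·) (σ α 0) (M' α))
        - ∑ α, p α * vnEntropy (Matrix.kroneckerMap (· * ·) (σ α 0) (M' α))
        ≤ (vnEntropy (∑ α, p α • σ α 0) - ∑ α, p α * vnEntropy (σ α 0))
          + (vnEntropy (∑ α, p α • M' α) - ∑ α, p α * vnEntropy (M' α)) := hpair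
      _ ≤ (vnEntropy (∑ α, p α • σ α 0) - ∑ α, p α * vnEntropy (σ α 0))
          + ∑ k : Fin n, (vnEntropy (∑ α, p α • σ α k.succ)
            - ∑ α, p α * vnEntropy (σ α k.succ)) := by linarith [hIH]

end Main

end HolevoAux

/-- Subadditivity of the Holevo quantity over tensor factors of product states. -/
theorem holevo_subadditive_tensor {N n : ℕ} {d : Fin n → ℕ}
    (p : Fin N → ℝ) (hp : ∀ α, 0 ≤ p α) (hpsum : ∑ α, p α = 1)
    (σ : Fin N → (k : Fin n) → Matrix (Fin (d k)) (Fin (d k)) ℂ)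
    (hσ : ∀ α k, IsDensity (σ α k)) :
    vnEntropy (∑ α, p α •
        (Matrix.of fun f g : (k : Fin n) → Fin (d k) => ∏ k, σ α k (f k) (g k)))
      - ∑ α, p α * vnEntropy
        (Matrix.of fun f g : (k : Fin n) → Fin (d k) => ∏ k, σ α k (f k) (g k))
    ≤ ∑ k, (vnEntropy (∑ α, p α • σ α k) - ∑ α, p α * vnEntropy (σ α k)) :=
  HolevoAux.holevo_main p hp hpsum d σ hσ
end

section
/- Mixed-channel Holevo quantity bound: for the mixture channel Φ = Σ_i γ_i φ_i acting on an ensemble {p_j, ρ_j}, the Holevo quantity satisfies χ({p_j, Φ(ρ_j)}) ≤ Σ_i γ_i χ({p_j, φ_i(ρ_j)}) + H(γ), where H(γ) = −Σ_i γ_i log γ_i. -/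
open Matrix BigOperators
open scoped ComplexOrder

section AuxCore

lemma core_real {d : Type*} [Fintype d] (lam mu : d → ℝ) (V : Matrix d d ℂ) (γ : ℝ) (hγ : 0 < γ)
    (hlam0 : ∀ k, 0 ≤ lam k) (hlam1 : ∑ k, lam k = 1)
    (hmu0 : ∀ l, 0 ≤ mu l) (hmu1 : ∑ l, mu l = 1)
    (hrow : ∀ k, ∑ l, Complex.normSq (V k l) = 1)
    (hcol : ∀ l, ∑ k, Complex.normSq (V k l) = 1)
    (hdom : ∀ l, γ * (∑ k, lam k * Complex.normSq (V k l)) ≤ mu l)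
    (hF5 : ∀ (k : d) (w : d → ℂ), γ * (lam k * Complex.normSq (∑ l, V k l * w l))
        ≤ ∑ l, mu l * Complex.normSq (w l)) :
    (Real.log γ + ∑ k, lam k * Real.log (lam k)
        ≤ ∑ k, ∑ l, lam k * Complex.normSq (V k l) * Real.log (mu l)) ∧
    (∑ k, ∑ l, lam k * Complex.normSq (V k l) * Real.log (mu l)
        ≤ ∑ k, lam k * Real.log (lam k)) := by
  set c : d → d → ℝ := fun k l => Complex.normSq (V k l) with hc
  have hc0 : ∀ k l, 0 ≤ c k l := fun k l => Complex.normSq_nonneg _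
  have hsupp : ∀ k l, mu l = 0 → lam k * c k l = 0 := by
    intro k l hl
    have h1 : ∑ k', lam k' * c k' l ≤ 0 := by
      have := hdom l; rw [hl] at this
      nlinarith [this]
    have h2 : ∀ k' ∈ Finset.univ, 0 ≤ lam k' * c k' l :=
      fun k' _ => mul_nonneg (hlam0 k') (hc0 k' l)
    have h3 : ∑ k', lam k' * c k' l = 0 :=
      le_antisymm h1 (Finset.sum_nonneg h2)
    exact (Finset.sum_eq_zero_iff_of_nonneg h2).mp h3 k (Finset.mem_univ k)
  constructor
  · -- lower bound
    have perk : ∀ k, lam k * Real.log (γ * lam k) ≤ ∑ l, lam k * c k l * Real.log (mu l) := by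
      intro k
      rcases eq_or_lt_of_le (hlam0 k) with h0 | hpos
      · simp [← h0]
      set s : ℝ := ∑ l, (if mu l = 0 then 0 else c k l / mu l) with hs
      have hc0' : ∀ l, mu l = 0 → c k l = 0 := by
        intro l hl
        have := hsupp k l hl
        rcases mul_eq_zero.mp this with h | h
        · exact absurd h.symm (ne_of_lt hpos)
        · exact h
      have hterm0 : ∀ l, 0 ≤ (if mu l = 0 then 0 else c k l / mu l) := by
        intro l; split
        · exact le_rfl
        · exact div_nonneg (hc0 k l) (hmu0 l)
      have hs_nonneg : 0 ≤ s := Finset.sum_nonneg fun l _ => hterm0 l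
      have hs_pos : 0 < s := by
        rcases eq_or_lt_of_le hs_nonneg with h0 | h; swap; · exact h
        exfalso
        have hall := (Finset.sum_eq_zero_iff_of_nonneg (fun l _ => hterm0 l)).mp h0.symm
        have : ∑ l, c k l = 0 := by
          apply Finset.sum_eq_zero
          intro l _
          by_cases hm : mu l = 0
          · exact hc0' l hm
          · have := hall l (Finset.mem_univ l)
            rw [if_neg hm] at this
            have hmpos : 0 < mu l := lt_of_le_of_ne (hmu0 l) (Ne.symm hm)
            field_simp at this; simpa using this
        rw [hrow k] at this; norm_num at this
      -- use hF5 with the test vector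
      set w : d → ℂ := fun l => if mu l = 0 then 0 else (starRingEnd ℂ) (V k l) / (mu l : ℂ) with hw
      have key1 : ∑ l, V k l * w l = (s : ℂ) := by
        rw [hs, Complex.ofReal_sum]
        apply Finset.sum_congr rfl
        intro l _
        by_cases hm : mu l = 0
        · simp [hw, hm]
        · rw [hw]
          simp only [if_neg hm]
          rw [mul_div_assoc', Complex.mul_conj, Complex.ofReal_div]
      have key2 : ∀ l, mu l * Complex.normSq (w l) = (if mu l = 0 then 0 else c k l / mu l) := by
        intro l
        by_cases hm : mu l = 0
        · simp [hw, hm]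
        · rw [hw]; simp only [if_neg hm]
          rw [Complex.normSq_div, Complex.normSq_conj, Complex.normSq_ofReal]
          have hmpos : 0 < mu l := lt_of_le_of_ne (hmu0 l) (Ne.symm hm)
          field_simp [hc]
          ring
      have hF := hF5 k w
      rw [key1, Complex.normSq_ofReal] at hF
      have hFs : γ * (lam k * (s * s)) ≤ s := by
        calc γ * (lam k * (s*s)) ≤ ∑ l, mu l * Complex.normSq (w l) := hF
        _ = s := by rw [hs]; exact Finset.sum_congr rfl fun l _ => key2 l
      have hγls : γ * lam k * s ≤ 1 := by
        have := mul_le_mul_of_nonneg_right (le_refl (1:ℝ)) hs_pos.le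
        nlinarith [hFs, hs_pos]
      -- per-l log bound
      have hlog : ∀ l, c k l - γ * lam k * (if mu l = 0 then 0 else c k l / mu l)
          ≤ c k l * (Real.log (mu l) - Real.log (γ * lam k)) := by
        intro l
        by_cases hm : mu l = 0
        · rw [hc0' l hm]; simp
        · rw [if_neg hm]
          have hmpos : 0 < mu l := lt_of_le_of_ne (hmu0 l) (Ne.symm hm)
          have hgl : 0 < γ * lam k := mul_pos hγ hpos
          have h1 : Real.log (γ * lam k / mu l) ≤ γ * lam k / mu l - 1 :=
            Real.log_le_sub_one_of_pos (div_pos hgl hmpos)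
          rw [Real.log_div (ne_of_gt hgl) hm] at h1
          have h2 := mul_le_mul_of_nonneg_left h1 (hc0 k l)
          have h3 : c k l * (γ * lam k / mu l) = γ * lam k * (c k l / mu l) := by ring
          nlinarith [h2]
      have hsum : ∑ l, (c k l - γ * lam k * (if mu l = 0 then 0 else c k l / mu l))
          ≤ ∑ l, c k l * (Real.log (mu l) - Real.log (γ * lam k)) :=
        Finset.sum_le_sum fun l _ => hlog l
      rw [Finset.sum_sub_distrib, ← Finset.mul_sum, ← hs, hrow k] at hsum
      have hexp : ∑ l, c k l * (Real.log (mu l) - Real.log (γ * lam k))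
          = (∑ l, c k l * Real.log (mu l)) - Real.log (γ * lam k) := by
        rw [Finset.sum_congr rfl (fun l _ => mul_sub (c k l) _ _), Finset.sum_sub_distrib,
          ← Finset.sum_mul, hrow k, one_mul]
      rw [hexp] at hsum
      have hlogle : Real.log (γ * lam k) ≤ ∑ l, c k l * Real.log (mu l) := by
        linarith [hγls, hsum]
      calc lam k * Real.log (γ * lam k) ≤ lam k * ∑ l, c k l * Real.log (mu l) :=
            mul_le_mul_of_nonneg_left hlogle (hlam0 k)
        _ = ∑ l, lam k * c k l * Real.log (mu l) := by
            rw [Finset.mul_sum]; exact Finset.sum_congr rfl fun l _ => by ring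
    have hsumk := Finset.sum_le_sum (fun k (_ : k ∈ Finset.univ) => perk k)
    have hexp : ∑ k, lam k * Real.log (γ * lam k)
        = Real.log γ + ∑ k, lam k * Real.log (lam k) := by
      have : ∀ k, lam k * Real.log (γ * lam k) = lam k * Real.log γ + lam k * Real.log (lam k) := by
        intro k
        rcases eq_or_lt_of_le (hlam0 k) with h0 | hpos
        · simp [← h0]
        · rw [Real.log_mul (ne_of_gt hγ) (ne_of_gt hpos)]; ring
      rw [Finset.sum_congr rfl (fun k _ => this k), Finset.sum_add_distrib, ← Finset.sum_mul,
        hlam1, one_mul]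
    rw [hexp] at hsumk
    exact hsumk
  · -- upper bound (Klein)
    have perk : ∀ k, ∑ l, lam k * c k l * Real.log (mu l)
        ≤ lam k * Real.log (lam k) + (∑ l, c k l * mu l) - lam k := by
      intro k
      rcases eq_or_lt_of_le (hlam0 k) with h0 | hpos
      · simp [← h0]
        exact Finset.sum_nonneg fun l _ => mul_nonneg (hc0 k l) (hmu0 l)
      have perl : ∀ l, lam k * c k l * Real.log (mu l)
          ≤ lam k * c k l * Real.log (lam k) + c k l * mu l - lam k * c k l := by
        intro l
        rcases eq_or_lt_of_le (hc0 k l) with hcz | hcpos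
        · rw [← hcz]; simp
        by_cases hm : mu l = 0
        · exfalso
          have := hsupp k l hm
          rcases mul_eq_zero.mp this with h | h
          · exact absurd h.symm (ne_of_lt hpos)
          · exact absurd h.symm (ne_of_lt hcpos)
        have hmpos : 0 < mu l := lt_of_le_of_ne (hmu0 l) (Ne.symm hm)
        have h1 : Real.log (mu l / lam k) ≤ mu l / lam k - 1 :=
          Real.log_le_sub_one_of_pos (div_pos hmpos hpos)
        rw [Real.log_div hm (ne_of_gt hpos)] at h1
        have h2 := mul_le_mul_of_nonneg_left h1 (le_of_lt (mul_pos hpos hcpos))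
        have h3 : lam k * c k l * (mu l / lam k) = c k l * mu l := by
          field_simp
        nlinarith [h2]
      calc ∑ l, lam k * c k l * Real.log (mu l)
          ≤ ∑ l, (lam k * c k l * Real.log (lam k) + c k l * mu l - lam k * c k l) :=
            Finset.sum_le_sum fun l _ => perl l
        _ = lam k * Real.log (lam k) + (∑ l, c k l * mu l) - lam k := by
            rw [Finset.sum_sub_distrib, Finset.sum_add_distrib]
            have e1 : ∑ l, lam k * c k l * Real.log (lam k) = lam k * Real.log (lam k) := by
              rw [← Finset.sum_mul, ← Finset.mul_sum, hrow k, mul_one]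
            have e2 : ∑ l : d, lam k * c k l = lam k := by
              rw [← Finset.mul_sum, hrow k, mul_one]
            rw [e1, e2]
    calc ∑ k, ∑ l, lam k * c k l * Real.log (mu l)
        ≤ ∑ k, (lam k * Real.log (lam k) + (∑ l, c k l * mu l) - lam k) :=
          Finset.sum_le_sum fun k _ => perk k
      _ = ∑ k, lam k * Real.log (lam k) + (∑ k, ∑ l, c k l * mu l) - 1 := by
          rw [Finset.sum_sub_distrib, Finset.sum_add_distrib, hlam1]
      _ = ∑ k, lam k * Real.log (lam k) := by
          have : ∑ k, ∑ l, c k l * mu l = 1 := by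
            rw [Finset.sum_comm]
            calc ∑ l, ∑ k, c k l * mu l = ∑ l, mu l * ∑ k, c k l := by
                  exact Finset.sum_congr rfl fun l _ => by rw [Finset.mul_sum]; exact Finset.sum_congr rfl fun k _ => by ring
              _ = 1 := by rw [Finset.sum_congr rfl fun l _ => by rw [hcol l, mul_one]]; exact hmu1
          rw [this]; ring

end AuxCore

section AuxMatrix
set_option linter.unusedSectionVars false
variable {d : Type*} [Fintype d] [DecidableEq d]

lemma quad_conj (U B : Matrix d d ℂ) (w : d → ℂ) :
    dotProduct (star (U *ᵥ w)) (B *ᵥ (U *ᵥ w)) = dotProduct (star w) ((star U * B * U) *ᵥ w) := by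
  rw [star_mulVec, ← Matrix.dotProduct_mulVec, Matrix.mulVec_mulVec, Matrix.dotProduct_mulVec,
    Matrix.dotProduct_mulVec, Matrix.vecMul_vecMul, Matrix.star_eq_conjTranspose,
    Matrix.mul_assoc, Matrix.dotProduct_mulVec]

lemma diag_quad (v : d → ℝ) (w : d → ℂ) :
    (dotProduct (star w) ((Matrix.diagonal (fun i => (v i : ℂ))) *ᵥ w)).re
      = ∑ i, v i * Complex.normSq (w i) := by
  simp only [dotProduct, Matrix.mulVec_diagonal, Pi.star_apply]
  rw [Complex.re_sum]
  congr 1; ext i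
  rw [show star (w i) * ((v i : ℂ) * w i) = (v i :ℂ) * (star (w i) * w i) by ring,
    RCLike.star_def, ← Complex.normSq_eq_conj_mul_self, ← Complex.ofReal_mul]
  exact Complex.ofReal_re _

lemma quad_single (M : Matrix d d ℂ) (l : d) :
    dotProduct (star (Pi.single l 1 : d → ℂ)) (M *ᵥ (Pi.single l 1 : d → ℂ)) = M l l := by
  simp [Matrix.mulVec_single, dotProduct, Pi.single_apply, Finset.sum_ite_eq,
    Matrix.star_apply, apply_ite]

lemma herm_trace_eq_sum {A : Matrix d d ℂ} (hA : A.IsHermitian) :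
    A.trace = ∑ i, (hA.eigenvalues i : ℂ) := by
  conv_lhs => rw [hA.spectral_theorem]
  simp only [Unitary.conjStarAlgAut_apply, Unitary.coe_star]
  rw [Matrix.trace_mul_cycle,
    (Matrix.mem_unitaryGroup_iff').mp (hA.eigenvectorUnitary).2, Matrix.one_mul,
    Matrix.trace_diagonal]
  rfl

lemma trace_matFun (f : ℝ → ℝ) {A : Matrix d d ℂ} (hA : A.IsHermitian) (B : Matrix d d ℂ) :
    (B * matFun f A).trace = ∑ l, (f (hA.eigenvalues l) : ℂ) *
      ((star (hA.eigenvectorUnitary : Matrix d d ℂ) * B *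
        (hA.eigenvectorUnitary : Matrix d d ℂ)) l l) := by
  have hm : matFun f A = (hA.eigenvectorUnitary : Matrix d d ℂ) *
      Matrix.diagonal (fun i => (f (hA.eigenvalues i) : ℂ)) *
      star (hA.eigenvectorUnitary : Matrix d d ℂ) := dif_pos hA
  rw [hm, ← Matrix.mul_assoc, ← Matrix.mul_assoc, Matrix.trace_mul_cycle, ← Matrix.mul_assoc]
  rw [Matrix.trace]
  simp only [Matrix.diag_apply, Matrix.mul_diagonal]
  exact Finset.sum_congr rfl fun l _ => by ring

lemma core_pair (τ ρ : Matrix d d ℂ) (hτ : IsDensity τ) (hρ : IsDensity ρ)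
    (γ : ℝ) (hγ : 0 < γ) (hle : (ρ - γ • τ).PosSemidef) :
    Real.log γ + ((τ * matFun Real.log τ).trace).re ≤ ((τ * matFun Real.log ρ).trace).re ∧
    ((τ * matFun Real.log ρ).trace).re ≤ ((τ * matFun Real.log τ).trace).re := by
  obtain ⟨hτP, hτtr⟩ := hτ
  obtain ⟨hρP, hρtr⟩ := hρ
  have hτH : τ.IsHermitian := hτP.1
  have hρH : ρ.IsHermitian := hρP.1
  set lam : d → ℝ := hτH.eigenvalues with hlamdef
  set mu : d → ℝ := hρH.eigenvalues with hmudef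
  set Ut : Matrix d d ℂ := (hτH.eigenvectorUnitary : Matrix d d ℂ) with hUtdef
  set Ur : Matrix d d ℂ := (hρH.eigenvectorUnitary : Matrix d d ℂ) with hUrdef
  set V : Matrix d d ℂ := star Ut * Ur with hVdef
  have hUt1 : star Ut * Ut = 1 := Matrix.mem_unitaryGroup_iff'.mp (hτH.eigenvectorUnitary).2
  have hUt2 : Ut * star Ut = 1 := Matrix.mem_unitaryGroup_iff.mp (hτH.eigenvectorUnitary).2
  have hUr1 : star Ur * Ur = 1 := Matrix.mem_unitaryGroup_iff'.mp (hρH.eigenvectorUnitary).2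
  have hUr2 : Ur * star Ur = 1 := Matrix.mem_unitaryGroup_iff.mp (hρH.eigenvectorUnitary).2
  have hVs : star V = star Ur * Ut := by rw [hVdef, Matrix.star_mul, star_star]
  have hV1 : star V * V = 1 := by
    rw [hVs, hVdef, Matrix.mul_assoc, ← Matrix.mul_assoc Ut, hUt2, Matrix.one_mul, hUr1]
  have hV2 : V * star V = 1 := by
    rw [hVs, hVdef, Matrix.mul_assoc, ← Matrix.mul_assoc Ur, hUr2, Matrix.one_mul, hUt1]
  have hrow : ∀ k, ∑ l, Complex.normSq (V k l) = 1 := by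
    intro k
    have h := congrArg (fun X : Matrix d d ℂ => X k k) hV2
    simp only [Matrix.mul_apply, Matrix.one_apply_eq] at h
    have h2 : ∑ l, (Complex.normSq (V k l) : ℂ) = 1 := by
      rw [← h]
      exact Finset.sum_congr rfl fun l _ => by
        rw [Matrix.star_apply, RCLike.star_def, Complex.mul_conj]
    exact_mod_cast h2
  have hcol : ∀ l, ∑ k, Complex.normSq (V k l) = 1 := by
    intro l
    have h := congrArg (fun X : Matrix d d ℂ => X l l) hV1
    simp only [Matrix.mul_apply, Matrix.one_apply_eq] at h
    have h2 : ∑ k, (Complex.normSq (V k l) : ℂ) = 1 := by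
      rw [← h]
      exact Finset.sum_congr rfl fun k _ => by
        rw [Matrix.star_apply, RCLike.star_def, mul_comm, Complex.mul_conj]
    exact_mod_cast h2
  have hDt : star Ut * τ * Ut = Matrix.diagonal (fun k => (lam k : ℂ)) :=
    (by have h := hτH.conjStarAlgAut_star_eigenvectorUnitary; simp only [Unitary.conjStarAlgAut_star_apply, Unitary.coe_star] at h; exact h)
  have hDr : star Ur * ρ * Ur = Matrix.diagonal (fun l => (mu l : ℂ)) :=
    (by have h := hρH.conjStarAlgAut_star_eigenvectorUnitary; simp only [Unitary.conjStarAlgAut_star_apply, Unitary.coe_star] at h; exact h)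
  have hτspec : τ = Ut * Matrix.diagonal (fun k => (lam k : ℂ)) * star Ut :=
    hτH.spectral_theorem
  have hQ : star Ur * τ * Ur = star V * Matrix.diagonal (fun k => (lam k : ℂ)) * V := by
    conv_lhs => rw [hτspec]
    rw [hVs, hVdef]
    simp only [Matrix.mul_assoc]
  have Qval : ∀ l, (star Ur * τ * Ur) l l
      = ((∑ k, lam k * Complex.normSq (V k l) : ℝ) : ℂ) := by
    intro l
    rw [hQ, Matrix.mul_apply, Complex.ofReal_sum]
    simp only [Matrix.mul_diagonal, Matrix.star_apply, RCLike.star_def]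
    exact Finset.sum_congr rfl fun k _ => by
      calc (starRingEnd ℂ) (V k l) * (lam k : ℂ) * V k l
          = (lam k : ℂ) * (V k l * (starRingEnd ℂ) (V k l)) := by ring
        _ = (lam k : ℂ) * ((Complex.normSq (V k l) : ℝ) : ℂ) := by rw [Complex.mul_conj]
        _ = ((lam k * Complex.normSq (V k l) : ℝ) : ℂ) := by push_cast; ring
  have hsplit : star Ur * (ρ - γ • τ) * Ur = star Ur * ρ * Ur - γ • (star Ur * τ * Ur) := by
    rw [Matrix.mul_sub, Matrix.mul_smul, Matrix.sub_mul, Matrix.smul_mul]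
  have e2 : ∀ w : d → ℂ, (dotProduct (star w) ((star Ur * τ * Ur) *ᵥ w)).re
      = ∑ k, lam k * Complex.normSq ((V *ᵥ w) k) := by
    intro w
    rw [hQ, ← quad_conj, diag_quad]
  have master : ∀ w : d → ℂ,
      γ * (∑ k, lam k * Complex.normSq ((V *ᵥ w) k)) ≤ ∑ l, mu l * Complex.normSq (w l) := by
    intro w
    have h0 := hle.re_dotProduct_nonneg (Ur *ᵥ w)
    rw [RCLike.re_to_complex, quad_conj, hsplit, Matrix.sub_mulVec, dotProduct_sub,
      Matrix.smul_mulVec, dotProduct_smul, Complex.sub_re, Complex.real_smul,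
      Complex.re_ofReal_mul, e2] at h0
    have e1 : (dotProduct (star w) ((star Ur * ρ * Ur) *ᵥ w)).re
        = ∑ l, mu l * Complex.normSq (w l) := by rw [hDr, diag_quad]
    rw [e1] at h0
    linarith
  have hF5 : ∀ (k : d) (w : d → ℂ), γ * (lam k * Complex.normSq (∑ l, V k l * w l))
      ≤ ∑ l, mu l * Complex.normSq (w l) := by
    intro k w
    refine le_trans ?_ (master w)
    have hterm : lam k * Complex.normSq ((V *ᵥ w) k)
        ≤ ∑ k', lam k' * Complex.normSq ((V *ᵥ w) k') :=
      Finset.single_le_sum (fun k' _ => mul_nonneg (hτP.eigenvalues_nonneg k')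
        (Complex.normSq_nonneg _)) (Finset.mem_univ k)
    have hV : (V *ᵥ w) k = ∑ l, V k l * w l := rfl
    rw [← hV]
    exact mul_le_mul_of_nonneg_left hterm (le_of_lt hγ)
  have hdom : ∀ l, γ * (∑ k, lam k * Complex.normSq (V k l)) ≤ mu l := by
    intro l
    have h := hF5
    have hm := master (Pi.single l 1)
    have eL : ∑ k, lam k * Complex.normSq ((V *ᵥ (Pi.single l 1 : d → ℂ)) k)
        = ∑ k, lam k * Complex.normSq (V k l) := by
      refine Finset.sum_congr rfl fun k _ => ?_
      congr 2
      simp [Matrix.mulVec_single]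
    have eR : ∑ l', mu l' * Complex.normSq ((Pi.single l 1 : d → ℂ) l') = mu l := by
      rw [Finset.sum_eq_single l]
      · simp
      · intro l' _ hne; simp [Pi.single_apply, hne]
      · intro h; exact absurd (Finset.mem_univ l) h
    rw [eL, eR] at hm
    exact hm
  have hlam0 : ∀ k, 0 ≤ lam k := fun k => hτP.eigenvalues_nonneg k
  have hmu0 : ∀ l, 0 ≤ mu l := fun l => hρP.eigenvalues_nonneg l
  have hlam1 : ∑ k, lam k = 1 := by
    have h := herm_trace_eq_sum hτH
    rw [hτtr] at h
    exact_mod_cast h.symm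
  have hmu1 : ∑ l, mu l = 1 := by
    have h := herm_trace_eq_sum hρH
    rw [hρtr] at h
    exact_mod_cast h.symm
  obtain ⟨hlow, hup⟩ := core_real lam mu V γ hγ hlam0 hlam1 hmu0 hmu1 hrow hcol hdom hF5
  -- bridge traces
  have Ttau : ((τ * matFun Real.log τ).trace).re = ∑ k, lam k * Real.log (lam k) := by
    rw [trace_matFun Real.log hτH τ]
    rw [show (star (hτH.eigenvectorUnitary : Matrix d d ℂ) * τ *
        (hτH.eigenvectorUnitary : Matrix d d ℂ)) = Matrix.diagonal (fun k => (lam k : ℂ)) from hDt]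
    rw [Complex.re_sum]
    refine Finset.sum_congr rfl fun k _ => ?_
    rw [Matrix.diagonal_apply_eq, ← Complex.ofReal_mul]
    rw [Complex.ofReal_re]
    ring
  have Trho : ((τ * matFun Real.log ρ).trace).re
      = ∑ l, Real.log (mu l) * (∑ k, lam k * Complex.normSq (V k l)) := by
    rw [trace_matFun Real.log hρH τ]
    rw [Complex.re_sum]
    refine Finset.sum_congr rfl fun l _ => ?_
    rw [show (star (hρH.eigenvectorUnitary : Matrix d d ℂ) * τ *
        (hρH.eigenvectorUnitary : Matrix d d ℂ)) l l
      = ((∑ k, lam k * Complex.normSq (V k l) : ℝ) : ℂ) from Qval l]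
    rw [← Complex.ofReal_mul, Complex.ofReal_re]
  have hswap : ∑ l, Real.log (mu l) * (∑ k, lam k * Complex.normSq (V k l))
      = ∑ k, ∑ l, lam k * Complex.normSq (V k l) * Real.log (mu l) := by
    calc ∑ l, Real.log (mu l) * (∑ k, lam k * Complex.normSq (V k l))
        = ∑ l, ∑ k, lam k * Complex.normSq (V k l) * Real.log (mu l) := by
          refine Finset.sum_congr rfl fun l _ => ?_
          rw [Finset.mul_sum]
          exact Finset.sum_congr rfl fun k _ => by ring
      _ = ∑ k, ∑ l, lam k * Complex.normSq (V k l) * Real.log (mu l) := Finset.sum_comm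
  constructor
  · rw [Ttau, Trho, hswap]; exact hlow
  · rw [Ttau, Trho, hswap]; exact hup

lemma trace_self_fun (f : ℝ → ℝ) {A : Matrix d d ℂ} (hA : A.IsHermitian) :
    ((A * matFun f A).trace).re = ∑ k, hA.eigenvalues k * f (hA.eigenvalues k) := by
  rw [trace_matFun f hA A,
    show (star (hA.eigenvectorUnitary : Matrix d d ℂ) * A *
      (hA.eigenvectorUnitary : Matrix d d ℂ))
      = Matrix.diagonal (fun k => (hA.eigenvalues k : ℂ)) from (by have h := hA.conjStarAlgAut_star_eigenvectorUnitary; simp only [Unitary.conjStarAlgAut_star_apply, Unitary.coe_star] at h; exact h),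
    Complex.re_sum]
  refine Finset.sum_congr rfl fun k _ => ?_
  rw [Matrix.diagonal_apply_eq, ← Complex.ofReal_mul, Complex.ofReal_re]
  ring

lemma vnEntropy_eq {A : Matrix d d ℂ} (hA : A.IsHermitian) :
    vnEntropy A = -((A * matFun Real.log A).trace).re / Real.log 2 := by
  rw [vnEntropy, dif_pos hA, trace_self_fun Real.log hA, ← Finset.sum_neg_distrib]
  congr 1
  exact Finset.sum_congr rfl fun k _ => by rw [Real.negMulLog]; ring

lemma psd_smul_real {A : Matrix d d ℂ} (hA : A.PosSemidef) {r : ℝ} (hr : 0 ≤ r) :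
    (r • A).PosSemidef := by
  constructor
  · show (r • A)ᴴ = r • A
    rw [Matrix.conjTranspose_smul, star_trivial, hA.1]
  · intro x
    exact (hA.smul hr).2 x

lemma psd_sum {ι : Type*} (s : Finset ι) (f : ι → Matrix d d ℂ)
    (h : ∀ i ∈ s, (f i).PosSemidef) : (∑ i ∈ s, f i).PosSemidef :=
  Finset.sum_induction f _ (fun _ _ ha hb => ha.add hb) Matrix.PosSemidef.zero h

lemma density_mix {ι : Type*} [Fintype ι] (w : ι → ℝ) (hw0 : ∀ i, 0 ≤ w i)
    (hw1 : ∑ i, w i = 1) (A : ι → Matrix d d ℂ) (hA : ∀ i, IsDensity (A i)) :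
    IsDensity (∑ i, w i • A i) := by
  constructor
  · exact psd_sum _ _ fun i _ => psd_smul_real (hA i).1 (hw0 i)
  · rw [Matrix.trace_sum]
    have : ∀ i, (w i • A i).trace = ((w i : ℝ) : ℂ) := by
      intro i
      rw [Matrix.trace_smul, (hA i).2, Complex.real_smul, mul_one]
    rw [Finset.sum_congr rfl fun i _ => this i, ← Complex.ofReal_sum, hw1, Complex.ofReal_one]

lemma mix_bounds {ι : Type*} [Fintype ι] (γ : ι → ℝ) (hγ0 : ∀ i, 0 ≤ γ i)
    (hγ1 : ∑ i, γ i = 1) (τ : ι → Matrix d d ℂ) (hτ : ∀ i, IsDensity (τ i)) :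
    (∑ i, γ i * vnEntropy (τ i) ≤ vnEntropy (∑ i, γ i • τ i)) ∧
    (vnEntropy (∑ i, γ i • τ i) ≤ ∑ i, γ i * vnEntropy (τ i)
       + (∑ i, Real.negMulLog (γ i)) / Real.log 2) := by
  classical
  have hbar : IsDensity (∑ i, γ i • τ i) := density_mix γ hγ0 hγ1 τ hτ
  set ρb : Matrix d d ℂ := ∑ i, γ i • τ i with hρb
  have hbH : ρb.IsHermitian := hbar.1.1
  set E : ι → ℝ := fun i => ((τ i * matFun Real.log ρb).trace).re with hE
  set T : ι → ℝ := fun i => ((τ i * matFun Real.log (τ i)).trace).re with hT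
  have hlin : ((ρb * matFun Real.log ρb).trace).re = ∑ i, γ i * E i := by
    rw [hρb]
    rw [Matrix.sum_mul, Matrix.trace_sum, Complex.re_sum]
    refine Finset.sum_congr rfl fun i _ => ?_
    rw [Matrix.smul_mul, Matrix.trace_smul, Complex.real_smul, Complex.re_ofReal_mul]
  have hsub : ∀ i, (ρb - γ i • τ i).PosSemidef := by
    intro i
    have hsplit : ρb - γ i • τ i = ∑ i' ∈ Finset.univ.erase i, γ i' • τ i' := by
      rw [sub_eq_iff_eq_add, hρb]
      rw [← Finset.sum_erase_add Finset.univ _ (Finset.mem_univ i)]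
    rw [hsplit]
    exact psd_sum _ _ fun i' _ => psd_smul_real (hτ i').1 (hγ0 i')
  have hbounds : ∀ i, 0 < γ i → (Real.log (γ i) + T i ≤ E i ∧ E i ≤ T i) :=
    fun i hi => core_pair (τ i) ρb (hτ i) hbar (γ i) hi (hsub i)
  have key1 : ∑ i, γ i * E i ≤ ∑ i, γ i * T i := by
    refine Finset.sum_le_sum fun i _ => ?_
    rcases eq_or_lt_of_le (hγ0 i) with h0 | hpos
    · rw [← h0]; simp
    · exact mul_le_mul_of_nonneg_left (hbounds i hpos).2 (le_of_lt hpos)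
  have key2 : ∑ i, γ i * T i ≤ ∑ i, γ i * E i + ∑ i, Real.negMulLog (γ i) := by
    rw [← Finset.sum_add_distrib]
    refine Finset.sum_le_sum fun i _ => ?_
    rcases eq_or_lt_of_le (hγ0 i) with h0 | hpos
    · rw [← h0]; simp
    · have h := (hbounds i hpos).1
      rw [Real.negMulLog]
      nlinarith [h, hpos]
  have hL : 0 < Real.log 2 := Real.log_pos (by norm_num)
  have hvE : vnEntropy ρb = -(∑ i, γ i * E i) / Real.log 2 := by
    rw [vnEntropy_eq hbH, hlin]
  have hvT : ∀ i, vnEntropy (τ i) = -(T i) / Real.log 2 :=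
    fun i => vnEntropy_eq (hτ i).1.1
  have hsumT : ∑ i, γ i * vnEntropy (τ i) = -(∑ i, γ i * T i) / Real.log 2 := by
    calc ∑ i, γ i * vnEntropy (τ i) = ∑ i, (-(γ i * T i)) / Real.log 2 := by
          refine Finset.sum_congr rfl fun i _ => ?_
          rw [hvT i]; ring
      _ = -(∑ i, γ i * T i) / Real.log 2 := by
          rw [← Finset.sum_div, ← Finset.sum_neg_distrib]
  constructor
  · rw [hvE, hsumT]
    exact (div_le_div_iff_of_pos_right hL).mpr (by linarith [key1])
  · rw [hvE, hsumT, ← add_div]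
    exact (div_le_div_iff_of_pos_right hL).mpr (by linarith [key2])

lemma cptp_density {n m : Type*} [Fintype n] [DecidableEq n] [Fintype m] [DecidableEq m]
    (φ : Matrix n n ℂ →ₗ[ℂ] Matrix m m ℂ) (hφ : IsCPTP φ) {A : Matrix n n ℂ}
    (hA : IsDensity A) : IsDensity (φ A) := by
  constructor
  · have h1 := hφ.2 1 (A.submatrix Prod.fst Prod.fst) (hA.1.submatrix Prod.fst)
    have h2 := h1.submatrix (fun a : m => (a, (0 : Fin 1)))
    have h3 : (tensorExt φ (A.submatrix Prod.fst Prod.fst)).submatrix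
        (fun a : m => (a, (0 : Fin 1))) (fun a : m => (a, (0 : Fin 1))) = φ A := by
      ext a b
      show φ (Matrix.of fun i j => A.submatrix Prod.fst Prod.fst (i, (0:Fin 1)) (j, (0:Fin 1))) a b
        = φ A a b
      congr 1
    rwa [h3] at h2
  · rw [hφ.1 A, hA.2]

end AuxMatrix

/-- Holevo quantity of a mixture channel is bounded by the average of the branch Holevo
quantities plus the Shannon entropy of the mixing distribution. -/
theorem mixture_holevo_bound {dI dO M J : ℕ}
    (φ : Fin M → (Matrix (Fin dI) (Fin dI) ℂ →ₗ[ℂ] Matrix (Fin dO) (Fin dO) ℂ))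
    (hφ : ∀ i, IsCPTP (φ i))
    (γ : Fin M → ℝ) (hγ : ∀ i, 0 ≤ γ i) (hγ1 : ∑ i, γ i = 1)
    (p : Fin J → ℝ) (hp : ∀ j, 0 ≤ p j) (hp1 : ∑ j, p j = 1)
    (ρ : Fin J → Matrix (Fin dI) (Fin dI) ℂ) (hρ : ∀ j, IsDensity (ρ j)) :
    vnEntropy (∑ j, p j • ∑ i, γ i • φ i (ρ j))
        - ∑ j, p j * vnEntropy (∑ i, γ i • φ i (ρ j))
      ≤ ∑ i, γ i * (vnEntropy (∑ j, p j • φ i (ρ j)) - ∑ j, p j * vnEntropy (φ i (ρ j)))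
        + (∑ i, Real.negMulLog (γ i)) / Real.log 2 := by
  classical
  have hd : ∀ i j, IsDensity (φ i (ρ j)) := fun i j => cptp_density (φ i) (hφ i) (hρ j)
  have hσ : ∀ i, IsDensity (∑ j, p j • φ i (ρ j)) :=
    fun i => density_mix p hp hp1 _ (fun j => hd i j)
  have hswap : (∑ j, p j • ∑ i, γ i • φ i (ρ j)) = ∑ i, γ i • ∑ j, p j • φ i (ρ j) := by
    simp_rw [Finset.smul_sum]
    rw [Finset.sum_comm]
    refine Finset.sum_congr rfl fun i _ => Finset.sum_congr rfl fun j _ => ?_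
    rw [smul_comm]
  have hb := (mix_bounds γ hγ hγ1 (fun i => ∑ j, p j • φ i (ρ j)) hσ).2
  have ha : ∀ j, ∑ i, γ i * vnEntropy (φ i (ρ j)) ≤ vnEntropy (∑ i, γ i • φ i (ρ j)) :=
    fun j => (mix_bounds γ hγ hγ1 (fun i => φ i (ρ j)) (fun i => hd i j)).1
  have hA2 : ∑ j, p j * ∑ i, γ i * vnEntropy (φ i (ρ j))
      ≤ ∑ j, p j * vnEntropy (∑ i, γ i • φ i (ρ j)) :=
    Finset.sum_le_sum fun j _ => mul_le_mul_of_nonneg_left (ha j) (hp j)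
  have hdouble : ∑ j, p j * ∑ i, γ i * vnEntropy (φ i (ρ j))
      = ∑ i, γ i * ∑ j, p j * vnEntropy (φ i (ρ j)) := by
    simp_rw [Finset.mul_sum]
    rw [Finset.sum_comm]
    refine Finset.sum_congr rfl fun i _ => Finset.sum_congr rfl fun j _ => by ring
  have hrhs : ∑ i, γ i * (vnEntropy (∑ j, p j • φ i (ρ j)) - ∑ j, p j * vnEntropy (φ i (ρ j)))
      = ∑ i, γ i * vnEntropy (∑ j, p j • φ i (ρ j))
        - ∑ i, γ i * ∑ j, p j * vnEntropy (φ i (ρ j)) := by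
    rw [← Finset.sum_sub_distrib]
    exact Finset.sum_congr rfl fun i _ => by ring
  rw [hswap, hrhs]
  linarith [hb, hA2, hdouble.symm.le, hdouble.le]
end
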